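/- Let w be an extended affine permutation whose Shi poset has width m. Let b, b' ∈ B_w with b' = b + t·(n,n) for some t ≥ 0, and suppose (b = b₀, b₁, …, b_k = b') is a reverse path, i.e. each b_{i+1} is strictly south and strictly east of b_i. Then k ≤ t·m. -/

import Mathlib

/-- The Shi relation `i ≤_S j` for an extended affine permutation `w`. -/
def ShiLe (n : ℕ) (w : ℤ → ℤ) (i j : ℤ) : Prop :=
  i = j ∨ (j < i ∧ w i < w j) ∨ w i + n < w j

/-- An antichain of the Shi poset of `w` on `{1,…,n}`. -/
def IsShiAntichain (n : ℕ) (w : ℤ → ℤ) (A : Finset ℤ) : Prop :=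
  A ⊆ Finset.Icc (1 : ℤ) n ∧
  ∀ i ∈ A, ∀ j ∈ A, i ≠ j → ¬ ShiLe n w i j ∧ ¬ ShiLe n w j i

/-- `m` is the width (maximal antichain size) of the Shi poset of `w`. -/
def IsShiWidth (n : ℕ) (w : ℤ → ℤ) (m : ℕ) : Prop :=
  (∃ A : Finset ℤ, IsShiAntichain n w A ∧ A.card = m) ∧
  ∀ A : Finset ℤ, IsShiAntichain n w A → A.card ≤ m

/-- A proper numbering of the balls `(i, w i)` of `w`, indexed by rows: monotone
(strictly northwest implies strictly smaller) and continuous (some ball weakly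
northwest is numbered one less). -/
def IsProper (w d : ℤ → ℤ) : Prop :=
  (∀ i j : ℤ, i < j → w i < w j → d i < d j) ∧
  (∀ j : ℤ, ∃ i : ℤ, i ≤ j ∧ w i ≤ w j ∧ d i = d j - 1)

/-- An `(n,n)`-invariant southeast chain of balls of `w` (identified by rows). -/
def IsChannelChain (n : ℕ) (w : ℤ → ℤ) (C : Set ℤ) : Prop :=
  (∀ i : ℤ, i ∈ C ↔ i + n ∈ C) ∧ ∀ i ∈ C, ∀ j ∈ C, i < j → w i < w j

/-- The density of such a chain: number of `(n,n)`-translate classes. -/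
noncomputable def chDensity (n : ℕ) (C : Set ℤ) : ℕ := (C ∩ Set.Icc (1 : ℤ) n).ncard

/-- A channel: an `(n,n)`-invariant southeast chain of maximal density. -/
def IsChannel (n : ℕ) (w : ℤ → ℤ) (C : Set ℤ) : Prop :=
  IsChannelChain n w C ∧
  ∀ D : Set ℤ, IsChannelChain n w D → chDensity n D ≤ chDensity n C

/-- `C₁` is southwest of `C₂`: every element of `C₁` has an element of `C₂`
weakly northeast of it. -/
def ChannelSW (n : ℕ) (w : ℤ → ℤ) (C₁ C₂ : Set ℤ) : Prop :=
  ∀ i ∈ C₁, ∃ j ∈ C₂, j ≤ i ∧ w i ≤ w j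

/- ===================== auxiliary material ===================== -/

private lemma stmt6_wshift {n : ℕ} {w : ℤ → ℤ} (hper : ∀ i : ℤ, w (i + n) = w i + n) :
    ∀ (j x : ℤ), w (x + j * n) = w x + j * n := by
  have hneg : ∀ x : ℤ, w (x - n) = w x - n := by
    intro x
    have h := hper (x - n)
    have e : x - n + n = x := by ring
    rw [e] at h
    linarith
  intro j
  induction j using Int.induction_on with
  | zero => intro x; simp
  | succ j ih =>
    intro x
    have e : x + ((j : ℤ) + 1) * n = (x + n) + (j : ℤ) * n := by ring
    rw [e, ih, hper]
    ring
  | pred j ih =>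
    intro x
    have e : x + (-(j : ℤ) - 1) * n = (x - n) + (-(j : ℤ)) * n := by ring
    rw [e, ih, hneg]
    ring

private lemma stmt6_mono {w : ℤ → ℤ} {k : ℕ} {p : ℕ → ℤ}
    (hstep : ∀ l, l < k → p l < p (l + 1) ∧ w (p l) < w (p (l + 1))) :
    ∀ a b : ℕ, a < b → b ≤ k → p a < p b ∧ w (p a) < w (p b) := by
  intro a b
  induction b with
  | zero => intro h _; exact absurd h (Nat.not_lt_zero a)
  | succ b ih =>
    intro hab hbk
    by_cases h : a = b
    · subst h; exact hstep a (by omega)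
    · have h1 := ih (by omega) (by omega)
      have h2 := hstep b (by omega)
      exact ⟨h1.1.trans h2.1, h1.2.trans h2.2⟩

private def stmt6_inP (t k : ℕ) (n : ℕ) (p : ℕ → ℤ) (c : ℕ) (z : ℤ) : Prop :=
  ∃ l : ℕ, l < k ∧ ∃ q : ℤ, z = p l + (q * t + c) * n

open Classical in
private noncomputable def stmt6_S (n t k : ℕ) (w : ℤ → ℤ) (p : ℕ → ℤ) (x : ℤ) : Finset ℕ :=
  (Finset.range t).filter fun c => ∃ z : ℤ, stmt6_inP t k n p c z ∧ z < x ∧ w x < w z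

private lemma stmt6_mem_S {n t k : ℕ} {w : ℤ → ℤ} {p : ℕ → ℤ} {x : ℤ} {c : ℕ} :
    c ∈ stmt6_S n t k w p x ↔
      c < t ∧ ∃ z : ℤ, stmt6_inP t k n p c z ∧ z < x ∧ w x < w z := by
  classical
  unfold stmt6_S
  rw [Finset.mem_filter, Finset.mem_range]

private noncomputable def stmt6_psi (n t k : ℕ) (w : ℤ → ℤ) (p : ℕ → ℤ) (x : ℤ) : ℕ :=
  (stmt6_S n t k w p x).card

section Stmt6Aux

variable {n t k : ℕ} {w : ℤ → ℤ} {i : ℤ} {p : ℕ → ℤ}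

/-- The path together with its `(tn,tn)`-translates is a SE chain. -/
private lemma stmt6_chain (hn : 0 < n) (ht : 0 < t)
    (hper : ∀ i : ℤ, w (i + n) = w i + n)
    (h0 : p 0 = i) (hend : p k = i + t * n)
    (hstep : ∀ l, l < k → p l < p (l + 1) ∧ w (p l) < w (p (l + 1))) :
    ∀ l, l ≤ k → ∀ l', l' ≤ k → ∀ d : ℤ,
      p l + d * (t * n) < p l' → w (p l) + d * (t * n) < w (p l') := by
  have hn' : (0:ℤ) < n := by exact_mod_cast hn
  have ht' : (0:ℤ) < t := by exact_mod_cast ht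
  have htn : (0:ℤ) < (t:ℤ) * n := mul_pos ht' hn'
  have hrk : p k = p 0 + (t:ℤ) * n := by rw [h0, hend]
  have hwk : w (p k) = w (p 0) + (t:ℤ) * n := by
    rw [h0, hend]; exact stmt6_wshift hper t i
  have hle : ∀ a b : ℕ, a ≤ b → b ≤ k → p a ≤ p b ∧ w (p a) ≤ w (p b) := by
    intro a b hab hbk
    rcases eq_or_lt_of_le hab with rfl | h
    · exact ⟨le_rfl, le_rfl⟩
    · have h2 := stmt6_mono hstep a b h hbk; exact ⟨h2.1.le, h2.2.le⟩
  intro l hl l' hl' d hrow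
  rcases lt_trichotomy d 0 with hd | rfl | hd
  · have hd1 : d ≤ -1 := by omega
    have hdle : d * ((t:ℤ) * n) ≤ -((t:ℤ) * n) := by nlinarith
    by_cases hlk : l = k
    · subst hlk
      by_cases hl0 : l' = 0
      · subst hl0
        have h2 : d * ((t:ℤ) * n) < -((t:ℤ) * n) := by linarith [hrow, hrk]
        have hd2 : d ≤ -2 := by
          by_contra hcon
          push_neg at hcon
          have h3 : (0:ℤ) ≤ d + 1 := by omega
          nlinarith
        have h4 : d * ((t:ℤ) * n) ≤ -2 * ((t:ℤ) * n) := by nlinarith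
        linarith [hwk]
      · have hw0 : w (p 0) < w (p l') :=
          (stmt6_mono hstep 0 l' (Nat.pos_of_ne_zero hl0) hl').2
        linarith [hwk]
    · have hwlt : w (p l) < w (p k) := (stmt6_mono hstep l k (by omega) le_rfl).2
      have hw0 : w (p 0) ≤ w (p l') := (hle 0 l' (Nat.zero_le _) hl').2
      linarith [hwk]
  · simp only [zero_mul, add_zero] at hrow ⊢
    have hll' : l < l' := by
      by_contra hcon
      push_neg at hcon
      exact absurd hrow (not_lt.mpr (hle l' l hcon hl).1)
    exact (stmt6_mono hstep l l' hll' hl').2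
  · exfalso
    have hd1 : 1 ≤ d := hd
    have h1 : p l' ≤ p k := (hle l' k hl' le_rfl).1
    have h2 : p 0 ≤ p l := (hle 0 l (Nat.zero_le _) hl).1
    have h3 : (t:ℤ) * n ≤ d * ((t:ℤ) * n) := by nlinarith
    linarith [hrk]

/-- The own translate-class of a ball of `Q` is not in its shadow set. -/
private lemma stmt6_notin (hn : 0 < n) (ht : 0 < t)
    (hper : ∀ i : ℤ, w (i + n) = w i + n)
    (h0 : p 0 = i) (hend : p k = i + t * n)
    (hstep : ∀ l, l < k → p l < p (l + 1) ∧ w (p l) < w (p (l + 1))) :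
    ∀ x : ℤ, ∀ l₀ : ℕ, l₀ < k → ∀ j₀ : ℤ, x = p l₀ + j₀ * n →
      (j₀ % t).toNat ∉ stmt6_S n t k w p x := by
  intro x l₀ hl₀ j₀ hx hmem
  rw [stmt6_mem_S] at hmem
  obtain ⟨-, z, ⟨l, hl, qz, hz⟩, hzx, hwzx⟩ := hmem
  have ht' : (0:ℤ) < t := by exact_mod_cast ht
  have hr : (((j₀ % t).toNat : ℤ)) = j₀ % t :=
    Int.toNat_of_nonneg (Int.emod_nonneg j₀ (ne_of_gt ht'))
  have hj₀ : j₀ = (j₀ / (t:ℤ)) * t + j₀ % t := by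
    rw [mul_comm]; exact (Int.mul_ediv_add_emod j₀ t).symm
  rw [hr] at hz
  have e1 : z = p l + qz * ((t:ℤ) * n) + (j₀ % t) * n := by rw [hz]; ring
  have e2 : x = p l₀ + (j₀ / (t:ℤ)) * ((t:ℤ) * n) + (j₀ % t) * n := by
    rw [hx]
    nth_rewrite 1 [hj₀]
    ring
  have hrow : p l + (qz - j₀ / (t:ℤ)) * ((t:ℤ) * n) < p l₀ := by
    have h5 := hzx
    rw [e1, e2] at h5
    have e3 : (qz - j₀ / (t:ℤ)) * ((t:ℤ) * n)
        = qz * ((t:ℤ) * n) - (j₀ / (t:ℤ)) * ((t:ℤ) * n) := by ring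
    linarith
  have hcol := stmt6_chain hn ht hper h0 hend hstep l (le_of_lt hl) l₀ (le_of_lt hl₀)
    (qz - j₀ / (t:ℤ)) hrow
  have hwz : w z = w (p l) + (qz * (t:ℤ) + j₀ % t) * n := by
    rw [hz]; exact stmt6_wshift hper _ _
  have hwx : w x = w (p l₀) + j₀ * n := by
    rw [hx]; exact stmt6_wshift hper _ _
  have hlt : w z < w x := by
    rw [hwz, hwx]
    nth_rewrite 2 [hj₀]
    have e5 : (qz * (t:ℤ) + j₀ % t) * n
        = qz * ((t:ℤ) * n) + (j₀ % t) * n := by ring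
    have e6 : ((j₀ / (t:ℤ)) * t + j₀ % t) * n
        = (j₀ / (t:ℤ)) * ((t:ℤ) * n) + (j₀ % t) * n := by ring
    have e7 : (qz - j₀ / (t:ℤ)) * ((t:ℤ) * n)
        = qz * ((t:ℤ) * n) - (j₀ / (t:ℤ)) * ((t:ℤ) * n) := by ring
    linarith [hcol]
  linarith [hwzx]

private lemma stmt6_psi_lt (hn : 0 < n) (ht : 0 < t)
    (hper : ∀ i : ℤ, w (i + n) = w i + n)
    (h0 : p 0 = i) (hend : p k = i + t * n)
    (hstep : ∀ l, l < k → p l < p (l + 1) ∧ w (p l) < w (p (l + 1))) :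
    ∀ x y : ℤ, (∃ l : ℕ, l < k ∧ ∃ j : ℤ, x = p l + j * n) → x < y → w y < w x →
      stmt6_psi n t k w p x < stmt6_psi n t k w p y := by
  intro x y hx hxy hwyx
  obtain ⟨l₀, hl₀, j₀, hxe⟩ := hx
  have hsub : stmt6_S n t k w p x ⊆ stmt6_S n t k w p y := by
    intro c hc
    rw [stmt6_mem_S] at hc ⊢
    obtain ⟨hcr, z, hzP, hzx, hwxz⟩ := hc
    exact ⟨hcr, z, hzP, hzx.trans hxy, hwyx.trans hwxz⟩
  have ht' : (0:ℤ) < t := by exact_mod_cast ht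
  have hrnn : 0 ≤ j₀ % t := Int.emod_nonneg j₀ (ne_of_gt ht')
  have hrlt : j₀ % t < t := Int.emod_lt_of_pos j₀ ht'
  have hmem : (j₀ % t).toNat ∈ stmt6_S n t k w p y := by
    rw [stmt6_mem_S]
    refine ⟨by omega, x, ⟨l₀, hl₀, j₀ / (t:ℤ), ?_⟩, hxy, hwyx⟩
    rw [hxe]
    have hcast : (((j₀ % t).toNat : ℤ)) = j₀ % t := Int.toNat_of_nonneg hrnn
    rw [hcast]
    have e : j₀ = j₀ / (t:ℤ) * t + j₀ % t := by
      rw [mul_comm]; exact (Int.mul_ediv_add_emod j₀ t).symm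
    rw [← e]
  have hnot := stmt6_notin hn ht hper h0 hend hstep x l₀ hl₀ j₀ hxe
  exact Finset.card_lt_card
    ((Finset.ssubset_iff_of_subset hsub).mpr ⟨_, hmem, hnot⟩)

private lemma stmt6_psi_lt_t (hn : 0 < n) (ht : 0 < t)
    (hper : ∀ i : ℤ, w (i + n) = w i + n)
    (h0 : p 0 = i) (hend : p k = i + t * n)
    (hstep : ∀ l, l < k → p l < p (l + 1) ∧ w (p l) < w (p (l + 1))) :
    ∀ x : ℤ, (∃ l : ℕ, l < k ∧ ∃ j : ℤ, x = p l + j * n) →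
      stmt6_psi n t k w p x < t := by
  rintro x ⟨l₀, hl₀, j₀, hxe⟩
  have ht' : (0:ℤ) < t := by exact_mod_cast ht
  have hrnn : 0 ≤ j₀ % t := Int.emod_nonneg j₀ (ne_of_gt ht')
  have hrlt : j₀ % t < t := Int.emod_lt_of_pos j₀ ht'
  have hnot := stmt6_notin hn ht hper h0 hend hstep x l₀ hl₀ j₀ hxe
  have hsub : stmt6_S n t k w p x ⊆ Finset.range t := by
    intro c hc
    rw [stmt6_mem_S] at hc
    exact Finset.mem_range.mpr hc.1
  have hss : stmt6_S n t k w p x ⊂ Finset.range t :=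
    (Finset.ssubset_iff_of_subset hsub).mpr
      ⟨(j₀ % t).toNat, Finset.mem_range.mpr (by omega), hnot⟩
  have hcard := Finset.card_lt_card hss
  rw [Finset.card_range] at hcard
  exact hcard

private lemma stmt6_psi_shift (ht : 0 < t)
    (hper : ∀ i : ℤ, w (i + n) = w i + n) :
    ∀ x : ℤ, stmt6_psi n t k w p (x + n) = stmt6_psi n t k w p x := by
  intro x
  unfold stmt6_psi
  refine (Finset.card_bij (fun c _ => (c + 1) % t) ?_ ?_ ?_).symm
  · intro c hc
    rw [stmt6_mem_S] at hc ⊢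
    obtain ⟨hct, z, ⟨l, hl, q, hz⟩, hzx, hwxz⟩ := hc
    refine ⟨Nat.mod_lt _ ht, z + n, ⟨l, hl, ?_⟩, by linarith, ?_⟩
    · by_cases hc1 : c + 1 = t
      · refine ⟨q + 1, ?_⟩
        have hm0 : (c + 1) % t = 0 := by rw [hc1, Nat.mod_self]
        rw [hm0, hz]
        have hcz : ((c:ℤ) + 1) = (t:ℤ) := by exact_mod_cast hc1
        push_cast
        linear_combination (n : ℤ) * hcz
      · refine ⟨q, ?_⟩
        rw [Nat.mod_eq_of_lt (by omega), hz]
        push_cast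
        ring
    · rw [hper x, hper z]
      linarith
  · intro a ha b hb hab
    rw [stmt6_mem_S] at ha hb
    have hat : a < t := ha.1
    have hbt : b < t := hb.1
    have hmod : ∀ c : ℕ, c < t → (c + 1) % t = if c + 1 = t then 0 else c + 1 := by
      intro c hc
      split
      · next h => rw [h, Nat.mod_self]
      · next h => exact Nat.mod_eq_of_lt (by omega)
    rw [hmod a hat, hmod b hbt] at hab
    split_ifs at hab <;> omega
  · intro c' hc'
    rw [stmt6_mem_S] at hc'
    obtain ⟨hct', z', ⟨l, hl, q, hz'⟩, hzx', hwxz'⟩ := hc'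
    have hwzn : w (z' - n) = w z' - n := by
      have h1 := hper (z' - n)
      have e : z' - n + n = z' := by ring
      rw [e] at h1
      linarith
    rw [hper] at hwxz'
    by_cases hc0 : c' = 0
    · subst hc0
      refine ⟨t - 1, ?_, ?_⟩
      · rw [stmt6_mem_S]
        refine ⟨by omega, z' - n, ⟨l, hl, q - 1, ?_⟩, by linarith, by linarith⟩
        rw [hz']
        push_cast [Nat.cast_sub (by omega : 1 ≤ t)]
        ring
      · rw [Nat.sub_add_cancel (by omega : 1 ≤ t), Nat.mod_self]
    · refine ⟨c' - 1, ?_, ?_⟩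
      · rw [stmt6_mem_S]
        refine ⟨by omega, z' - n, ⟨l, hl, q, ?_⟩, by linarith, by linarith⟩
        rw [hz']
        push_cast [Nat.cast_sub (by omega : 1 ≤ c')]
        ring
      · rw [Nat.sub_add_cancel (by omega : 1 ≤ c'), Nat.mod_eq_of_lt hct']

end Stmt6Aux

private lemma stmt6_main {n : ℕ} (hn : 0 < n) {w : ℤ → ℤ}
    (hinj : Function.Injective w)
    (hper : ∀ i : ℤ, w (i + n) = w i + n) (m : ℕ)
    (hm : ∀ A : Finset ℤ, IsShiAntichain n w A → A.card ≤ m) :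
    ∀ t k : ℕ, ∀ i : ℤ, ∀ p : ℕ → ℤ, p 0 = i → p k = i + t * n →
      (∀ l, l < k → p l < p (l + 1) ∧ w (p l) < w (p (l + 1))) → k ≤ t * m := by
  intro t
  induction t using Nat.strong_induction_on with
  | _ t IH =>
  intro k i p h0 hend hstep
  classical
  rcases Nat.eq_zero_or_pos k with rfl | hk
  · exact Nat.zero_le _
  have hn' : (0:ℤ) < n := by exact_mod_cast hn
  have ht : 0 < t := by
    rcases Nat.eq_zero_or_pos t with rfl | ht
    · exfalso
      have h1 := (stmt6_mono hstep 0 k hk le_rfl).1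
      rw [h0, hend] at h1
      simp at h1
    · exact ht
  by_cases hrep : ∃ l l' : ℕ, l < l' ∧ l' ≤ k ∧ ¬(l = 0 ∧ l' = k) ∧
      ∃ q : ℤ, p l' = p l + q * n
  · -- a repeated residue: split the path and use the inductive hypothesis
    obtain ⟨l, l', hll', hl'k, hnlk, q, hq⟩ := hrep
    have hpl : p l < p l' := (stmt6_mono hstep l l' hll' hl'k).1
    have hq0 : 0 < q := by
      by_contra hcon
      push_neg at hcon
      nlinarith
    have hqt : q < (t:ℤ) := by
      have hqn : q * n < (t:ℤ) * n := by
        rcases Nat.eq_zero_or_pos l with rfl | hl0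
        · have hl'k2 : l' < k := by
            rcases eq_or_lt_of_le hl'k with rfl | h
            · exact absurd ⟨rfl, rfl⟩ hnlk
            · exact h
          have h1 : p l' < p k := (stmt6_mono hstep l' k hl'k2 le_rfl).1
          rw [hend] at h1
          rw [h0] at hq
          linarith
        · have h1 : p 0 < p l := (stmt6_mono hstep 0 l hl0 (by omega)).1
          have h2 : p l' ≤ p k := by
            rcases eq_or_lt_of_le hl'k with rfl | h
            · exact le_rfl
            · exact (stmt6_mono hstep l' k h le_rfl).1.le
          rw [h0] at h1
          rw [hend] at h2
          linarith
      exact lt_of_mul_lt_mul_right hqn hn'.le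
    set q' : ℕ := q.toNat with hq'def
    have hq'c : (q' : ℤ) = q := Int.toNat_of_nonneg hq0.le
    have hq't : q' < t := by omega
    have hsub1 : l' - l ≤ q' * m := by
      refine IH q' hq't (l' - l) (p l) (fun r => p (l + r)) rfl ?_ ?_
      · show p (l + (l' - l)) = p l + (q' : ℤ) * n
        rw [Nat.add_sub_cancel' hll'.le, hq'c]
        exact hq
      · intro r hr
        show p (l + r) < p (l + (r + 1)) ∧ w (p (l + r)) < w (p (l + (r + 1)))
        have e : l + (r + 1) = (l + r) + 1 := by omega
        rw [e]
        exact hstep (l + r) (by omega)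
    have hwsub : ∀ x : ℤ, w (x - q * n) = w x - q * n := by
      intro x
      have h1 := stmt6_wshift hper (-q) x
      have e : x + (-q) * n = x - q * n := by ring
      rw [e] at h1
      rw [h1]
      ring
    have hsub2 : k - (l' - l) ≤ (t - q') * m := by
      set p2 : ℕ → ℤ := fun r => if r ≤ l then p r else p (r + (l' - l)) - q * n with hp2
      have hp2a : ∀ r, r ≤ l → p2 r = p r := by
        intro r hr; simp only [hp2]; rw [if_pos hr]
      have hp2b : ∀ r, ¬ r ≤ l → p2 r = p (r + (l' - l)) - q * n := by
        intro r hr; simp only [hp2]; rw [if_neg hr]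
      have hcast : ((t - q' : ℕ) : ℤ) = (t : ℤ) - q := by
        rw [Nat.cast_sub hq't.le, hq'c]
      refine IH (t - q') (by omega) (k - (l' - l)) i p2 ?_ ?_ ?_
      · rw [hp2a 0 (Nat.zero_le _)]; exact h0
      · by_cases hc : l' = k
        · have e : k - (l' - l) = l := by omega
          rw [e, hp2a l le_rfl, hcast]
          have h5 : p k = p l + q * n := by rw [← hc]; exact hq
          rw [hend] at h5
          have e2 : ((t:ℤ) - q) * n = (t:ℤ) * n - q * n := by ring
          linarith
        · have hl'k2 : l' < k := lt_of_le_of_ne hl'k hc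
          have hnle : ¬ k - (l' - l) ≤ l := by omega
          rw [hp2b _ hnle]
          have e : k - (l' - l) + (l' - l) = k := by omega
          rw [e, hend, hcast]
          have e2 : ((t:ℤ) - q) * n = (t:ℤ) * n - q * n := by ring
          linarith
      · intro r hr
        by_cases h1' : r + 1 ≤ l
        · rw [hp2a r (by omega), hp2a (r + 1) h1']
          exact hstep r (by omega)
        · by_cases h2' : r ≤ l
          · have hrl : r = l := by omega
            rw [hp2a r h2', hp2b (r + 1) h1']
            have hl'k2 : l' < k := by omega
            have e : r + 1 + (l' - l) = l' + 1 := by omega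
            rw [e, hrl]
            have hst := hstep l' hl'k2
            have hwl' : w (p l') = w (p l) + q * n := by
              rw [hq]; exact stmt6_wshift hper q (p l)
            constructor
            · linarith [hst.1, hq]
            · rw [hwsub]
              linarith [hst.2, hwl']
          · rw [hp2b r h2', hp2b (r + 1) (by omega)]
            have e : r + 1 + (l' - l) = (r + (l' - l)) + 1 := by omega
            rw [e]
            have hst := hstep (r + (l' - l)) (by omega)
            constructor
            · linarith [hst.1]
            · rw [hwsub, hwsub]
              linarith [hst.2]
    have hsum : q' * m + (t - q') * m = t * m := by
      rw [← Nat.add_mul]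
      congr 1
      omega
    calc k = (l' - l) + (k - (l' - l)) := by omega
      _ ≤ q' * m + (t - q') * m := Nat.add_le_add hsub1 hsub2
      _ = t * m := hsum
  · -- no repeated residues: extract antichains
    push_neg at hrep
    have hresid : ∀ l, l < k → ∀ l', l' < k → (∃ q : ℤ, p l' = p l + q * n) → l = l' := by
      rintro l hl l' hl' ⟨q, hq⟩
      by_contra hne
      rcases Nat.lt_or_ge l l' with h | h
      · exact hrep l l' h (le_of_lt hl') (by omega) q hq
      · have h' : l' < l := by omega
        exact hrep l' l h' (le_of_lt hl) (by omega) (-q) (by rw [hq]; ring)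
    have hQn : ∀ x : ℤ, (∃ l, l < k ∧ ∃ j : ℤ, x = p l + j * n) →
        (∃ l, l < k ∧ ∃ j : ℤ, x + n = p l + j * n) := by
      rintro x ⟨l, hl, j, rfl⟩
      exact ⟨l, hl, j + 1, by ring⟩
    have hkey : ∀ x y : ℤ, x ∈ Finset.Icc (1:ℤ) (n:ℤ) → y ∈ Finset.Icc (1:ℤ) (n:ℤ) →
        (∃ l, l < k ∧ ∃ j : ℤ, x = p l + j * n) →
        (∃ l, l < k ∧ ∃ j : ℤ, y = p l + j * n) →
        stmt6_psi n t k w p x = stmt6_psi n t k w p y → x < y →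
        w x < w y ∧ w y < w x + n := by
      intro x y hxI hyI hxQ hyQ hψ hxy
      rw [Finset.mem_Icc] at hxI hyI
      have h1 : ¬ w y < w x := fun h => by
        have := stmt6_psi_lt hn ht hper h0 hend hstep x y hxQ hxy h
        omega
      have hne : w x ≠ w y := fun h => (ne_of_lt hxy) (hinj h)
      have hw1 : w x < w y := lt_of_le_of_ne (not_lt.mp h1) hne
      have hyxn : y < x + n := by linarith [hxI.1, hyI.2]
      have h2 : ¬ w (x + n) < w y := fun h => by
        have hlt := stmt6_psi_lt hn ht hper h0 hend hstep y (x + n) hyQ hyxn h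
        rw [stmt6_psi_shift ht hper x] at hlt
        omega
      have hne2 : w y ≠ w (x + n) := fun h => (ne_of_lt hyxn) (hinj h)
      have hw2 : w y < w (x + n) := lt_of_le_of_ne (not_lt.mp h2) hne2
      rw [hper x] at hw2
      exact ⟨hw1, hw2⟩
    have hanti : ∀ c : ℕ, IsShiAntichain n w ((Finset.Icc (1:ℤ) (n:ℤ)).filter
        (fun x => (∃ l, l < k ∧ ∃ j : ℤ, x = p l + j * n) ∧ stmt6_psi n t k w p x = c)) := by
      intro c
      constructor
      · exact Finset.filter_subset _ _
      · intro a ha b hb hab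
        rw [Finset.mem_filter] at ha hb
        obtain ⟨haI, haQ, haψ⟩ := ha
        obtain ⟨hbI, hbQ, hbψ⟩ := hb
        rcases lt_trichotomy a b with h | h | h
        · obtain ⟨hw1, hw2⟩ := hkey a b haI hbI haQ hbQ (haψ.trans hbψ.symm) h
          constructor
          · intro hS
            unfold ShiLe at hS
            rcases hS with rfl | ⟨hba, -⟩ | hw
            · exact hab rfl
            · exact absurd h (not_lt.mpr hba.le)
            · linarith
          · intro hS
            unfold ShiLe at hS
            rcases hS with rfl | ⟨-, hw⟩ | hw
            · exact hab rfl
            · linarith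
            · linarith
        · exact absurd h hab
        · obtain ⟨hw1, hw2⟩ := hkey b a hbI haI hbQ haQ (hbψ.trans haψ.symm) h
          constructor
          · intro hS
            unfold ShiLe at hS
            rcases hS with rfl | ⟨-, hw⟩ | hw
            · exact hab rfl
            · linarith
            · linarith
          · intro hS
            unfold ShiLe at hS
            rcases hS with rfl | ⟨hab', -⟩ | hw
            · exact hab rfl
            · exact absurd h (not_lt.mpr hab'.le)
            · linarith
    have hkB : k = ((Finset.Icc (1:ℤ) (n:ℤ)).filter
        (fun x => ∃ l, l < k ∧ ∃ j : ℤ, x = p l + j * n)).card := by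
      have hbij := Finset.card_bij
        (s := Finset.range k)
        (t := (Finset.Icc (1:ℤ) (n:ℤ)).filter
          (fun x => ∃ l, l < k ∧ ∃ j : ℤ, x = p l + j * n))
        (fun l _ => (p l - 1) % n + 1) ?_ ?_ ?_
      · rw [Finset.card_range] at hbij
        exact hbij
      · intro l hl
        have hlk : l < k := Finset.mem_range.mp hl
        rw [Finset.mem_filter, Finset.mem_Icc]
        have hnn : 0 ≤ (p l - 1) % n := Int.emod_nonneg _ (ne_of_gt hn')
        have hlt : (p l - 1) % n < n := Int.emod_lt_of_pos _ hn'
        refine ⟨⟨by linarith, by linarith⟩, l, hlk, -((p l - 1) / n), ?_⟩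
        have hdm := Int.mul_ediv_add_emod (p l - 1) (n:ℤ)
        have e : (-((p l - 1) / (n:ℤ))) * n = -((n:ℤ) * ((p l - 1) / n)) := by ring
        linarith
      · intro a ha b hb hab
        have hak : a < k := Finset.mem_range.mp ha
        have hbk : b < k := Finset.mem_range.mp hb
        have hda := Int.mul_ediv_add_emod (p a - 1) (n:ℤ)
        have hdb := Int.mul_ediv_add_emod (p b - 1) (n:ℤ)
        have hab' : (p a - 1) % n = (p b - 1) % n := by linarith
        refine hresid a hak b hbk ⟨(p b - 1) / n - (p a - 1) / n, ?_⟩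
        have e : ((p b - 1) / (n:ℤ) - (p a - 1) / n) * n
            = (n:ℤ) * ((p b - 1) / n) - (n:ℤ) * ((p a - 1) / n) := by ring
        linarith
      · intro x hx
        rw [Finset.mem_filter, Finset.mem_Icc] at hx
        obtain ⟨⟨hx1, hx2⟩, l, hl, j, hxe⟩ := hx
        refine ⟨l, Finset.mem_range.mpr hl, ?_⟩
        have hdm := Int.mul_ediv_add_emod (p l - 1) (n:ℤ)
        have hnn : 0 ≤ (p l - 1) % n := Int.emod_nonneg _ (ne_of_gt hn')
        have hlt : (p l - 1) % n < n := Int.emod_lt_of_pos _ hn'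
        have hd : x - ((p l - 1) % n + 1) = (j + (p l - 1) / n) * n := by
          have e : (j + (p l - 1) / (n:ℤ)) * n = j * n + (n:ℤ) * ((p l - 1) / n) := by ring
          rw [hxe] at hx1 hx2 ⊢
          linarith
        have hd0 : j + (p l - 1) / (n:ℤ) = 0 := by
          rcases lt_trichotomy (j + (p l - 1) / (n:ℤ)) 0 with h | h | h
          · exfalso
            have h5 : (j + (p l - 1) / (n:ℤ)) * n ≤ -n := by nlinarith
            linarith
          · exact h
          · exfalso
            have h5 : (n:ℤ) ≤ (j + (p l - 1) / (n:ℤ)) * n := by nlinarith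
            linarith
        rw [hd0] at hd
        linarith
    have hBU : (Finset.Icc (1:ℤ) (n:ℤ)).filter
        (fun x => ∃ l, l < k ∧ ∃ j : ℤ, x = p l + j * n)
        = (Finset.range t).biUnion (fun c => (Finset.Icc (1:ℤ) (n:ℤ)).filter
            (fun x => (∃ l, l < k ∧ ∃ j : ℤ, x = p l + j * n) ∧
              stmt6_psi n t k w p x = c)) := by
      ext x
      simp only [Finset.mem_filter, Finset.mem_biUnion, Finset.mem_range]
      constructor
      · rintro ⟨hI, hQ⟩
        exact ⟨stmt6_psi n t k w p x,
          stmt6_psi_lt_t hn ht hper h0 hend hstep x hQ, hI, hQ, rfl⟩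
      · rintro ⟨c, -, hI, hQ, -⟩
        exact ⟨hI, hQ⟩
    have hdisj : ∀ c ∈ Finset.range t, ∀ c' ∈ Finset.range t, c ≠ c' →
        Disjoint ((Finset.Icc (1:ℤ) (n:ℤ)).filter
            (fun x => (∃ l, l < k ∧ ∃ j : ℤ, x = p l + j * n) ∧
              stmt6_psi n t k w p x = c))
          ((Finset.Icc (1:ℤ) (n:ℤ)).filter
            (fun x => (∃ l, l < k ∧ ∃ j : ℤ, x = p l + j * n) ∧
              stmt6_psi n t k w p x = c')) := by
      intro c _ c' _ hcc'
      rw [Finset.disjoint_left]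
      intro x hx hx'
      rw [Finset.mem_filter] at hx hx'
      exact hcc' (hx.2.2.symm.trans hx'.2.2)
    calc k = ((Finset.Icc (1:ℤ) (n:ℤ)).filter
          (fun x => ∃ l, l < k ∧ ∃ j : ℤ, x = p l + j * n)).card := hkB
      _ = ∑ c ∈ Finset.range t, ((Finset.Icc (1:ℤ) (n:ℤ)).filter
            (fun x => (∃ l, l < k ∧ ∃ j : ℤ, x = p l + j * n) ∧
              stmt6_psi n t k w p x = c)).card := by
          rw [hBU, Finset.card_biUnion hdisj]
      _ ≤ ∑ _c ∈ Finset.range t, m := Finset.sum_le_sum (fun c _ => hm _ (hanti c))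
      _ = t * m := by rw [Finset.sum_const, Finset.card_range, smul_eq_mul]

theorem stmt6 (n : ℕ) (hn : 0 < n) (w : ℤ → ℤ)
    (hbij : Function.Bijective w) (hper : ∀ i : ℤ, w (i + n) = w i + n)
    (m : ℕ) (hm : IsShiWidth n w m)
    (t k : ℕ) (i : ℤ) (p : ℕ → ℤ)
    (h0 : p 0 = i) (hend : p k = i + t * n)
    (hstep : ∀ l, l < k → p l < p (l + 1) ∧ w (p l) < w (p (l + 1))) :
    k ≤ t * m := by
  exact stmt6_main hn hbij.injective hper m hm.2 t k i p h0 hend hstep
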